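/- Let D be a v-coherent integral domain. Then for each nonzero finitely generated fractional ideal F of D and each prime ideal P of D, the equality (F D_P)^{v_{D_P}} = F^{v_D} D_P holds, where v_R denotes the divisorial closure operation E ↦ (R : (R : E)) over the ring R. -/

import Mathlib

open Pointwise

section Preamble

variable (D : Type*) [CommRing D] [IsDomain D]
variable (K : Type*) [Field K] [Algebra D K] [IsFractionRing D K]

/-- The localization `D_P` of `D` at a prime `P`, as a subalgebra of the quotient field. -/
noncomputable def locAt (P : Ideal D) (hP : P.IsPrime) : Subalgebra D K :=
  Localization.subalgebra K P.primeCompl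
    (fun x hx => mem_nonZeroDivisors_of_ne_zero (fun h0 : x = 0 => hx (h0 ▸ P.zero_mem)))

/-- `D_P` as a `D`-submodule of the quotient field. -/
noncomputable def locAtM (P : Ideal D) (hP : P.IsPrime) : Submodule D K :=
  Subalgebra.toSubmodule (locAt D K P hP)

variable {D K}

/-- `E` is finitely generated as a module over the subring corresponding to `Rm`. -/
def IsRFG (Rm E : Submodule D K) : Prop :=
  ∃ F₀ : Submodule D K, F₀.FG ∧ F₀ ≠ ⊥ ∧ E = F₀ * Rm

/-- `s` is a semistar operation on the subring corresponding to `Rm`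
(on `D` itself when `Rm = 1`): it is defined on the nonzero `Rm`-submodules of `K`. -/
def IsSemistar (Rm : Submodule D K) (s : Submodule D K → Submodule D K) : Prop :=
  (∀ E, E ≠ ⊥ → Rm * E ≤ E → Rm * s E ≤ s E) ∧
  (∀ (x : K) (E), x ≠ 0 → E ≠ ⊥ → Rm * E ≤ E → s (x • E) = x • s E) ∧
  (∀ E F, E ≠ ⊥ → F ≠ ⊥ → Rm * E ≤ E → Rm * F ≤ F → E ≤ F → s E ≤ s F) ∧
  (∀ E, E ≠ ⊥ → Rm * E ≤ E → E ≤ s E) ∧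
  (∀ E, E ≠ ⊥ → Rm * E ≤ E → s (s E) = s E)

/-- `s` is of finite type. -/
def IsFiniteType (Rm : Submodule D K) (s : Submodule D K → Submodule D K) : Prop :=
  ∀ E, E ≠ ⊥ → Rm * E ≤ E → s E = sSup {G | ∃ F, IsRFG Rm F ∧ F ≤ E ∧ G = s F}

/-- `s` is a.b. -/
def IsAB (Rm : Submodule D K) (s : Submodule D K → Submodule D K) : Prop :=
  ∀ F G H : Submodule D K, IsRFG Rm F → G ≠ ⊥ → Rm * G ≤ G → H ≠ ⊥ → Rm * H ≤ H →
    s (F * G) ≤ s (F * H) → s G ≤ s H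

/-- `s` is e.a.b. -/
def IsEAB (Rm : Submodule D K) (s : Submodule D K → Submodule D K) : Prop :=
  ∀ F G H : Submodule D K, IsRFG Rm F → IsRFG Rm G → IsRFG Rm H →
    s (F * G) ≤ s (F * H) → s G ≤ s H

/-- `s` is stable. -/
def IsStable (Rm : Submodule D K) (s : Submodule D K → Submodule D K) : Prop :=
  ∀ E F, E ≠ ⊥ → F ≠ ⊥ → Rm * E ≤ E → Rm * F ≤ F → s (E ⊓ F) = s E ⊓ s F

/-- The divisorial closure `E ↦ (R : (R : E))` over the subring corresponding to `Rm`. -/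
def vOp (Rm E : Submodule D K) : Submodule D K := Rm / (Rm / E)

/-- The `t`-operation over the subring corresponding to `Rm`. -/
def tOp (Rm E : Submodule D K) : Submodule D K :=
  sSup {G | ∃ F, IsRFG Rm F ∧ F ≤ E ∧ G = vOp Rm F}

end Preamble

variable {D : Type*} [CommRing D] [IsDomain D]
variable {K : Type*} [Field K] [Algebra D K] [IsFractionRing D K]

namespace Stmt9Aux

/-- Membership in the localization submodule. -/
lemma mem_locAtM {P : Ideal D} {hP : P.IsPrime} {x : K} :
    x ∈ locAtM D K P hP ↔ ∃ (a s : D) (_ : s ∈ P.primeCompl),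
      x = algebraMap D K a * (algebraMap D K s)⁻¹ := by
  have : x ∈ locAtM D K P hP ↔ ∃ (a s : D) (hs : s ∈ P.primeCompl),
      x = IsLocalization.mk' K a
        (⟨s, mem_nonZeroDivisors_of_ne_zero
          (fun h0 : s = 0 => hs (h0 ▸ P.zero_mem))⟩ : nonZeroDivisors D) := Iff.rfl
  rw [this]
  refine exists_congr fun a => exists_congr fun s => exists_congr fun hs => ?_
  rw [IsFractionRing.mk'_eq_div, div_eq_mul_inv]

lemma one_le_locAtM {P : Ideal D} {hP : P.IsPrime} :
    (1 : Submodule D K) ≤ locAtM D K P hP := by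
  rw [Submodule.one_eq_range]
  rintro _ ⟨r, rfl⟩
  exact (locAt D K P hP).algebraMap_mem r

lemma locAtM_mul_self {P : Ideal D} {hP : P.IsPrime} :
    locAtM D K P hP * locAtM D K P hP = locAtM D K P hP :=
  Subalgebra.isIdempotentElem_toSubmodule _

lemma inv_mem_locAtM {P : Ideal D} {hP : P.IsPrime} {s : D} (hs : s ∈ P.primeCompl) :
    (algebraMap D K s)⁻¹ ∈ locAtM D K P hP := by
  rw [mem_locAtM]
  exact ⟨1, s, hs, by rw [map_one, one_mul]⟩

/-- Localization of the colon by a finitely generated module. -/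
lemma loc_div {P : Ideal D} {hP : P.IsPrime} (F : Submodule D K) (hFG : F.FG) :
    locAtM D K P hP / (F * locAtM D K P hP) = ((1 : Submodule D K) / F) * locAtM D K P hP := by
  set Rm := locAtM D K P hP with hRmdef
  apply le_antisymm
  · -- hard direction
    intro x hx
    obtain ⟨T, hT⟩ := hFG
    -- for each generator f, x * f ∈ Rm
    have hF_le : F ≤ F * Rm := by
      conv_lhs => rw [← mul_one F]
      exact mul_le_mul_right one_le_locAtM _
    have hxf : ∀ f ∈ T, x * f ∈ Rm := fun f hf =>
      hx f (hF_le (hT ▸ Submodule.subset_span hf))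
    -- choose denominators
    classical
    choose a σ hσ hval using fun (f : {z // z ∈ T}) => mem_locAtM.mp (hxf f.1 f.2)
    set s : D := ∏ f ∈ T.attach, σ f with hsdef
    have hsP : s ∈ P.primeCompl := Submonoid.prod_mem _ (fun f _ => hσ _)
    have hs0 : (algebraMap D K) s ≠ 0 := by
      intro h
      have : s = 0 := IsFractionRing.injective D K (by rw [h, map_zero])
      exact hsP (this ▸ P.zero_mem)
    -- algebraMap s * x ∈ 1 / F
    have hkey : algebraMap D K s * x ∈ (1 : Submodule D K) / F := by
      rw [Submodule.mem_div_iff_forall_mul_mem]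
      intro y hy
      rw [← hT] at hy
      induction hy using Submodule.span_induction with
      | mem f hf =>
        have hfT : (⟨f, hf⟩ : {z // z ∈ T}) ∈ T.attach := T.mem_attach _
        rw [← Finset.mul_prod_erase T.attach _ hfT] at hsdef
        set t : D := ∏ g ∈ T.attach.erase ⟨f, hf⟩, σ g with htdef
        have hv : x * f = algebraMap D K (a ⟨f, hf⟩) * (algebraMap D K (σ ⟨f, hf⟩))⁻¹ :=
          hval ⟨f, hf⟩
        have hσ0 : (algebraMap D K) (σ ⟨f, hf⟩) ≠ 0 := by
          intro h
          have : σ ⟨f, hf⟩ = 0 := IsFractionRing.injective D K (by rw [h, map_zero])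
          exact hσ ⟨f, hf⟩ (this ▸ P.zero_mem)
        have hmemone : algebraMap D K (σ ⟨f, hf⟩) * (x * f) ∈ (1 : Submodule D K) := by
          rw [Submodule.one_eq_range]
          refine ⟨a ⟨f, hf⟩, ?_⟩
          rw [Algebra.linearMap_apply, hv, mul_comm (algebraMap D K (a ⟨f, hf⟩)),
            ← mul_assoc, mul_inv_cancel₀ hσ0, one_mul]
        have hstep : algebraMap D K s * x * f
            = t • (algebraMap D K (σ ⟨f, hf⟩) * (x * f)) := by
          rw [Algebra.smul_def, hsdef, map_mul]; ring
        rw [hstep]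
        exact Submodule.smul_mem _ _ hmemone
      | zero => rw [mul_zero]; exact Submodule.zero_mem _
      | add y z _ _ hy hz => rw [mul_add]; exact Submodule.add_mem _ hy hz
      | smul d y _ hy =>
        rw [mul_smul_comm]
        exact Submodule.smul_mem _ _ hy
    have hxeq : x = (algebraMap D K s * x) * (algebraMap D K s)⁻¹ := by
      rw [mul_comm (algebraMap D K s) x, mul_assoc, mul_inv_cancel₀ hs0, mul_one]
    rw [hxeq]
    exact Submodule.mul_mem_mul hkey (inv_mem_locAtM hsP)
  · rw [Submodule.le_div_iff_mul_le]
    have : (1 : Submodule D K) / F * Rm * (F * Rm) = ((1 : Submodule D K) / F * F) * (Rm * Rm) :=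
      mul_mul_mul_comm _ _ _ _
    rw [this, locAtM_mul_self]
    calc (1 : Submodule D K) / F * F * Rm ≤ 1 * Rm := by
          refine mul_le_mul_left ?_ _
          rw [Submodule.mul_le]
          intro m hm n hn
          exact Submodule.mem_div_iff_forall_mul_mem.mp hm n hn
      _ = Rm := one_mul _

lemma le_vop (E : Submodule D K) : E ≤ (1 : Submodule D K) / ((1 : Submodule D K) / E) := by
  intro x hx
  rw [Submodule.mem_div_iff_forall_mul_mem]
  intro y hy
  rw [mul_comm]
  exact Submodule.mem_div_iff_forall_mul_mem.mp hy x hx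

lemma div_le_div {E F G : Submodule D K} (h : F ≤ G) : E / G ≤ E / F := by
  intro x hx
  rw [Submodule.mem_div_iff_forall_mul_mem] at hx ⊢
  exact fun y hy => hx y (h hy)

lemma one_div_one_div_one_div (E : Submodule D K) :
    (1 : Submodule D K) / ((1 : Submodule D K) / ((1 : Submodule D K) / E))
      = (1 : Submodule D K) / E :=
  le_antisymm (div_le_div (le_vop E)) (le_vop ((1 : Submodule D K) / E))

end Stmt9Aux

open Stmt9Aux in
/-- if `D` is `v`-coherent, then `(F D_P)^{v_{D_P}} = F^{v_D} D_P` for every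
nonzero finitely generated fractional ideal `F` and every prime `P`. -/
theorem stmt9
    (hcoh : ∀ I : Submodule D K, I.FG → I ≠ ⊥ →
      ∃ F : Submodule D K, F.FG ∧ F ≠ ⊥ ∧ (1 : Submodule D K) / I = vOp 1 F)
    (F : Submodule D K) (hFG : F.FG) (hF : F ≠ ⊥) (P : Ideal D) (hP : P.IsPrime) :
    vOp (locAtM D K P hP) (F * locAtM D K P hP) = vOp 1 F * locAtM D K P hP := by
  set Rm := locAtM D K P hP with hRmdef
  obtain ⟨G, hGfg, hG0, hFv⟩ := hcoh F hFG hF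
  have hvopG : vOp (1 : Submodule D K) G = (1 : Submodule D K) / ((1 : Submodule D K) / G) := rfl
  have hvopF : vOp (1 : Submodule D K) F = (1 : Submodule D K) / G := by
    show (1 : Submodule D K) / ((1 : Submodule D K) / F) = _
    rw [hFv, hvopG, one_div_one_div_one_div]
  have hkey : Rm / (vOp (1 : Submodule D K) G * Rm) = Rm / (G * Rm) := by
    apply le_antisymm
    · refine div_le_div (mul_le_mul_left ?_ _)
      rw [hvopG]; exact le_vop G
    · rw [loc_div G hGfg, Submodule.le_div_iff_mul_le]
      have : (1 : Submodule D K) / G * Rm * (vOp (1 : Submodule D K) G * Rm)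
          = ((1 : Submodule D K) / G * vOp (1 : Submodule D K) G) * (Rm * Rm) :=
        mul_mul_mul_comm _ _ _ _
      rw [this, locAtM_mul_self]
      calc (1 : Submodule D K) / G * vOp (1 : Submodule D K) G * Rm ≤ 1 * Rm := by
            refine mul_le_mul_left ?_ _
            rw [Submodule.mul_le]
            intro m hm n hn
            rw [hvopG, Submodule.mem_div_iff_forall_mul_mem] at hn
            rw [mul_comm]
            exact hn m hm
        _ = Rm := one_mul _
  calc vOp Rm (F * Rm) = Rm / (Rm / (F * Rm)) := rfl
    _ = Rm / ((1 : Submodule D K) / F * Rm) := by rw [loc_div F hFG]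
    _ = Rm / (vOp (1 : Submodule D K) G * Rm) := by rw [hFv]
    _ = Rm / (G * Rm) := hkey
    _ = (1 : Submodule D K) / G * Rm := loc_div G hGfg
    _ = vOp 1 F * Rm := by rw [hvopF]
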